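/- Let v ∈ F₃ and let (Tₙ)ₙ be the associated sequence of subsets of ℤ³. Then for every n ∈ ℕ and every x ∈ Tₙ one has 0 ≤ ⟨x,v⟩ < Σ_{i=0}^{n} v₁⁽ⁱ⁾; consequently ∪_{n=0}^∞ Tₙ ⊆ P(v, Ω(v)). -/

import Mathlib

open Matrix
open scoped Classical

noncomputable section

abbrev Z3 := Fin 3 → ℤ
abbrev R3 := Fin 3 → ℝ

/-- The inner product `⟨x, v⟩` of an integer vector with a real vector. -/
def dot3 (x : Z3) (v : R3) : ℝ := ∑ i, (x i : ℝ) * v i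

/-- Two points of `ℤ³` are 2-adjacent if `‖x − y‖₁ = 1`. -/
def adj3 (x y : Z3) : Prop := (∑ i, |x i - y i|) = 1

/-- A subset of `ℤ³` is 2-connected if it is nonempty and any two of its points are
joined by a finite chain of points of the set with consecutive points 2-adjacent. -/
def Connected3 (A : Set Z3) : Prop :=
  A.Nonempty ∧ ∀ x ∈ A, ∀ y ∈ A,
    Relation.ReflTransGen (fun a b => b ∈ A ∧ adj3 a b) x y

/-- The arithmetical discrete plane `P(v, ω)`. -/
def Plane (v : R3) (ω : ℝ) : Set Z3 := {x | 0 ≤ dot3 x v ∧ dot3 x v < ω}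

/-- The connecting thickness `Ω(v)`. -/
def omegaConn (v : R3) : ℝ := sInf {ω : ℝ | 0 ≤ ω ∧ Connected3 (Plane v ω)}

/-- `O₃⁺ = {v : 0 ≤ v₁ ≤ v₂ ≤ v₃}`. -/
def O3 : Set R3 := {v | 0 ≤ v 0 ∧ v 0 ≤ v 1 ∧ v 1 ≤ v 2}

/-- The ordered fully subtractive map. -/
def FS (v : R3) : R3 :=
  if v 0 ≤ v 1 - v 0 ∧ v 1 - v 0 ≤ v 2 - v 0 then ![v 0, v 1 - v 0, v 2 - v 0]
  else if v 1 - v 0 < v 0 ∧ v 0 ≤ v 2 - v 0 then ![v 1 - v 0, v 0, v 2 - v 0]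
  else ![v 1 - v 0, v 2 - v 0, v 0]

/-- `F₃ = {v ∈ O₃⁺ : v₁⁽ⁿ⁾ + v₂⁽ⁿ⁾ > v₃⁽ⁿ⁾ for all n}`. -/
def F3set : Set R3 :=
  {v | v ∈ O3 ∧ ∀ n : ℕ, (FS^[n] v) 2 < (FS^[n] v) 0 + (FS^[n] v) 1}

/-- Branch index of `F` at `v`: values `0, 1, 2` encode the branches labelled `1, 2, 3`. -/
def FSidx (v : R3) : Fin 3 :=
  if v 0 ≤ v 1 - v 0 ∧ v 1 - v 0 ≤ v 2 - v 0 then 0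
  else if v 1 - v 0 < v 0 ∧ v 0 ≤ v 2 - v 0 then 1
  else 2

/-- The matrices `M₁, M₂, M₃` of the fully subtractive algorithm. -/
def Mmat : Fin 3 → Matrix (Fin 3) (Fin 3) ℤ :=
  ![!![1,0,0; 1,1,0; 1,0,1], !![0,1,0; 1,1,0; 0,1,1], !![0,0,1; 1,0,1; 0,1,1]]

def e1 : Z3 := ![1,0,0]

/-- The product `M₁ ⋯ Mₙ` of the matrices associated with the F-expansion of `v`. -/
def prodM (v : R3) (n : ℕ) : Matrix (Fin 3) (Fin 3) ℤ :=
  ((List.range n).map (fun j => Mmat (FSidx (FS^[j] v)))).prod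

/-- The translation vector `((M₁⋯Mₙ)ᵀ)⁻¹ · e₁`. -/
def transVec (v : R3) (n : ℕ) : Z3 := ((prodM v n)ᵀ)⁻¹ *ᵥ e1

/-- The sequence `Tₙ` of subsets of `ℤ³`: `T₀ = {0}`, `T_{n+1} = Tₙ ∪ (Tₙ + ((M₁⋯Mₙ)ᵀ)⁻¹·e₁)`
(so that `T₁ = {0, e₁}`, the empty matrix product being the identity). -/
def Tseq (v : R3) : ℕ → Set Z3
  | 0 => {0}
  | n + 1 => Tseq v n ∪ ((fun x => x + transVec v n) '' Tseq v n)
/-! ### Auxiliary lemmas -/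

/-- The standard basis vector of `ℤ³`. -/
def E3 (i : Fin 3) : Z3 := fun j => if j = i then 1 else 0

lemma dot3_add (x y : Z3) (v : R3) : dot3 (x + y) v = dot3 x v + dot3 y v := by
  unfold dot3
  rw [← Finset.sum_add_distrib]
  refine Finset.sum_congr rfl fun i _ => ?_
  simp only [Pi.add_apply]
  push_cast
  ring

lemma dot3_sub (x y : Z3) (v : R3) : dot3 (x - y) v = dot3 x v - dot3 y v := by
  unfold dot3
  rw [← Finset.sum_sub_distrib]
  refine Finset.sum_congr rfl fun i _ => ?_
  simp only [Pi.sub_apply]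
  push_cast
  ring

lemma dot3_zero (v : R3) : dot3 0 v = 0 := by simp [dot3]

lemma dot3_E3 (i : Fin 3) (v : R3) : dot3 (E3 i) v = v i := by
  fin_cases i <;> simp [dot3, E3, Fin.sum_univ_three]

lemma mem_Plane {u : R3} {t : ℝ} {x : Z3} :
    x ∈ Plane u t ↔ 0 ≤ dot3 x u ∧ dot3 x u < t := Iff.rfl

lemma adj3_symm {x y : Z3} (h : adj3 x y) : adj3 y x := by
  unfold adj3 at *
  simpa [abs_sub_comm] using h

lemma adj3_add_E3 (x : Z3) (i : Fin 3) : adj3 x (x + E3 i) := by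
  have h : ∀ j, x j - (x + E3 i) j = -(E3 i j) := fun j => by
    simp [Pi.add_apply]
  unfold adj3
  rw [Fin.sum_univ_three, h 0, h 1, h 2]
  fin_cases i <;> simp [E3]

lemma adj3_cases {x y : Z3} (h : adj3 x y) : ∃ i, y = x + E3 i ∨ x = y + E3 i := by
  have h3 : |x 0 - y 0| + |x 1 - y 1| + |x 2 - y 2| = 1 := by
    have h' := h
    unfold adj3 at h'
    rwa [Fin.sum_univ_three] at h'
  rw [Int.abs_eq_natAbs, Int.abs_eq_natAbs, Int.abs_eq_natAbs] at h3
  have key : ((x 0 - y 0 = 1 ∨ x 0 - y 0 = -1) ∧ x 1 = y 1 ∧ x 2 = y 2) ∨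
      ((x 1 - y 1 = 1 ∨ x 1 - y 1 = -1) ∧ x 0 = y 0 ∧ x 2 = y 2) ∨
      ((x 2 - y 2 = 1 ∨ x 2 - y 2 = -1) ∧ x 0 = y 0 ∧ x 1 = y 1) := by omega
  rcases key with ⟨h1 | h1, h2, h4⟩ | ⟨h1 | h1, h2, h4⟩ | ⟨h1 | h1, h2, h4⟩
  · exact ⟨0, Or.inr (by funext j; fin_cases j <;> simp [E3] <;> omega)⟩
  · exact ⟨0, Or.inl (by funext j; fin_cases j <;> simp [E3] <;> omega)⟩
  · exact ⟨1, Or.inr (by funext j; fin_cases j <;> simp [E3] <;> omega)⟩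
  · exact ⟨1, Or.inl (by funext j; fin_cases j <;> simp [E3] <;> omega)⟩
  · exact ⟨2, Or.inr (by funext j; fin_cases j <;> simp [E3] <;> omega)⟩
  · exact ⟨2, Or.inl (by funext j; fin_cases j <;> simp [E3] <;> omega)⟩

lemma O3_nonneg {w : R3} (hw : w ∈ O3) : ∀ i, 0 ≤ w i := by
  obtain ⟨h0, h1, h2⟩ := hw
  intro i; fin_cases i <;> simp <;> linarith

lemma O3_le2 {w : R3} (hw : w ∈ O3) : ∀ i, w i ≤ w 2 := by
  obtain ⟨h0, h1, h2⟩ := hw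
  intro i; fin_cases i <;> simp <;> linarith

lemma O3_ge0 {w : R3} (hw : w ∈ O3) : ∀ i, w 0 ≤ w i := by
  obtain ⟨h0, h1, h2⟩ := hw
  intro i; fin_cases i <;> simp <;> linarith

lemma FS_cases (w : R3) :
    (FSidx w = 0 ∧ FS w = ![w 0, w 1 - w 0, w 2 - w 0]) ∨
    (FSidx w = 1 ∧ FS w = ![w 1 - w 0, w 0, w 2 - w 0]) ∨
    (FSidx w = 2 ∧ FS w = ![w 1 - w 0, w 2 - w 0, w 0]) := by
  unfold FS FSidx
  split_ifs <;> simp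

lemma FS_mem_O3 {w : R3} (hw : w ∈ O3) : FS w ∈ O3 := by
  obtain ⟨h0, h1, h2⟩ := hw
  unfold FS
  split_ifs with hA hB
  · exact ⟨h0, by simpa using hA.1, by simpa using hA.2⟩
  · refine ⟨by simp; linarith, by simp; linarith [hB.1], by simp; linarith [hB.2]⟩
  · have hle : w 1 - w 0 ≤ w 2 - w 0 := by linarith
    have hba : w 1 - w 0 < w 0 := by
      by_contra hcon; push_neg at hcon; exact hA ⟨hcon, hle⟩
    have hca : w 2 - w 0 < w 0 := by
      by_contra hcon; push_neg at hcon; exact hB ⟨hba, hcon⟩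
    exact ⟨by simp; linarith, by simp; linarith, by simp; linarith⟩

lemma O3_pos0 {w : R3} (hw : w ∈ O3) (ht : w 2 < w 0 + w 1) : 0 < w 0 := by
  obtain ⟨h0, h1, h2⟩ := hw
  rcases lt_or_eq_of_le h0 with h | h
  · exact h
  · exfalso
    have hw0 : w 0 = 0 := h.symm
    rw [hw0] at ht h1
    linarith

lemma iter_facts (v : R3) (hv : v ∈ F3set) (n : ℕ) :
    FS^[n] v ∈ O3 ∧ 0 < (FS^[n] v) 0 ∧ (FS^[n] v) 2 < (FS^[n] v) 0 + (FS^[n] v) 1 := by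
  have hO : ∀ m, FS^[m] v ∈ O3 := by
    intro m
    induction m with
    | zero => exact hv.1
    | succ m ih => rw [Function.iterate_succ_apply']; exact FS_mem_O3 ih
  exact ⟨hO n, O3_pos0 (hO n) (hv.2 n), hv.2 n⟩

lemma FS_at_idx (w : R3) : FS w (FSidx w) = w 0 := by
  rcases FS_cases w with ⟨h1, h2⟩ | ⟨h1, h2⟩ | ⟨h1, h2⟩ <;> rw [h1, h2] <;> simp

lemma sum_FS (w : R3) : FS w 0 + FS w 1 + FS w 2 = w 0 + w 1 + w 2 - 2 * w 0 := by
  rcases FS_cases w with ⟨h1, h2⟩ | ⟨h1, h2⟩ | ⟨h1, h2⟩ <;> rw [h2] <;> simp <;> ring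
def Nmat : Fin 3 → Matrix (Fin 3) (Fin 3) ℤ :=
  ![!![1,0,0; -1,1,0; -1,0,1], !![-1,1,0; 1,0,0; -1,0,1], !![-1,1,0; -1,0,1; 1,0,0]]

lemma Nmat_mul_Mmat (j : Fin 3) : Nmat j * Mmat j = 1 := by
  fin_cases j <;> decide

lemma Mmat_mul_Nmat (j : Fin 3) : Mmat j * Nmat j = 1 := by
  fin_cases j <;> decide

lemma transpose_mulVec_E3 (A : Matrix (Fin 3) (Fin 3) ℤ) (i : Fin 3) :
    Aᵀ *ᵥ E3 i = A i := by
  funext l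
  simp only [Matrix.mulVec, dotProduct, Matrix.transpose_apply, E3]
  rw [Fin.sum_univ_three]
  fin_cases i <;> simp

/-- The admissible steps on the reduced side: `e_k` or `e_k + e_c`. -/
def StepD (k : Fin 3) (d : Z3) : Prop := d = E3 k ∨ ∃ c, c ≠ k ∧ d = E3 k + E3 c

lemma stepD_row (j i : Fin 3) : StepD j (Mmat j i) := by
  fin_cases j <;> fin_cases i
  · exact Or.inl (by decide)
  · exact Or.inr ⟨1, by decide, by decide⟩
  · exact Or.inr ⟨2, by decide, by decide⟩
  · exact Or.inl (by decide)
  · exact Or.inr ⟨0, by decide, by decide⟩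
  · exact Or.inr ⟨2, by decide, by decide⟩
  · exact Or.inl (by decide)
  · exact Or.inr ⟨0, by decide, by decide⟩
  · exact Or.inr ⟨1, by decide, by decide⟩

lemma Mmat_mulVec_FS (w : R3) :
    ((Mmat (FSidx w)).map (Int.cast : ℤ → ℝ)) *ᵥ FS w = w := by
  rcases FS_cases w with ⟨h1, h2⟩ | ⟨h1, h2⟩ | ⟨h1, h2⟩ <;> rw [h1, h2] <;> funext i <;>
    fin_cases i <;>
    simp [Mmat, Matrix.mulVec, dotProduct, Fin.sum_univ_three, Matrix.map_apply] <;>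
    ring

lemma map_mul_int (A B : Matrix (Fin 3) (Fin 3) ℤ) :
    (A * B).map (Int.cast : ℤ → ℝ) = A.map (Int.cast : ℤ → ℝ) * B.map (Int.cast : ℤ → ℝ) := by
  ext i j
  simp only [Matrix.map_apply, Matrix.mul_apply]
  push_cast
  rfl

lemma map_one_int : (1 : Matrix (Fin 3) (Fin 3) ℤ).map (Int.cast : ℤ → ℝ) = 1 := by
  ext i j
  by_cases h : i = j <;> simp [Matrix.map_apply, Matrix.one_apply, h]

lemma dot3_transpose_mulVec (A : Matrix (Fin 3) (Fin 3) ℤ) (x : Z3) (u : R3) :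
    dot3 (Aᵀ *ᵥ x) u = dot3 x ((A.map (Int.cast : ℤ → ℝ)) *ᵥ u) := by
  unfold dot3
  simp only [Matrix.mulVec, dotProduct, Matrix.transpose_apply, Matrix.map_apply]
  push_cast
  simp only [Finset.sum_mul, Finset.mul_sum]
  rw [Finset.sum_comm]
  refine Finset.sum_congr rfl fun m _ => Finset.sum_congr rfl fun i _ => by ring

lemma prodM_zero (v : R3) : prodM v 0 = 1 := by simp [prodM]

lemma prodM_succ (v : R3) (n : ℕ) :
    prodM v (n + 1) = prodM v n * Mmat (FSidx (FS^[n] v)) := by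
  unfold prodM
  rw [List.range_succ, List.map_append, List.prod_append]
  simp

def Qmat (v : R3) (n : ℕ) : Matrix (Fin 3) (Fin 3) ℤ :=
  ((List.range n).reverse.map (fun j => Nmat (FSidx (FS^[j] v)))).prod

lemma Qmat_zero (v : R3) : Qmat v 0 = 1 := by simp [Qmat]

lemma Qmat_succ (v : R3) (n : ℕ) :
    Qmat v (n + 1) = Nmat (FSidx (FS^[n] v)) * Qmat v n := by
  unfold Qmat
  rw [List.range_succ, List.reverse_append]
  simp

lemma Qmat_mul_prodM (v : R3) (n : ℕ) :
    Qmat v n * prodM v n = 1 ∧ prodM v n * Qmat v n = 1 := by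
  induction n with
  | zero => simp [Qmat_zero, prodM_zero]
  | succ n ih =>
    rw [prodM_succ, Qmat_succ]
    constructor
    · rw [mul_assoc, ← mul_assoc (Qmat v n), ih.1, one_mul, Nmat_mul_Mmat]
    · rw [mul_assoc, ← mul_assoc (Mmat _), Mmat_mul_Nmat, one_mul, ih.2]

lemma transVec_eq (v : R3) (n : ℕ) : transVec v n = (Qmat v n)ᵀ *ᵥ e1 := by
  unfold transVec
  have h : ((prodM v n)ᵀ)⁻¹ = (Qmat v n)ᵀ := by
    apply Matrix.inv_eq_right_inv
    rw [← Matrix.transpose_mul, (Qmat_mul_prodM v n).1, Matrix.transpose_one]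
  rw [h]

lemma prodM_mulVec (v : R3) (n : ℕ) :
    ((prodM v n).map (Int.cast : ℤ → ℝ)) *ᵥ (FS^[n] v) = v := by
  induction n with
  | zero => rw [prodM_zero, map_one_int]; simp
  | succ n ih =>
    rw [prodM_succ, Function.iterate_succ_apply', map_mul_int, ← Matrix.mulVec_mulVec,
      Mmat_mulVec_FS]
    exact ih

lemma Qmat_mulVec (v : R3) (n : ℕ) :
    ((Qmat v n).map (Int.cast : ℤ → ℝ)) *ᵥ v = FS^[n] v := by
  have h := prodM_mulVec v n
  calc ((Qmat v n).map (Int.cast : ℤ → ℝ)) *ᵥ v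
      = ((Qmat v n).map (Int.cast : ℤ → ℝ)) *ᵥ
        (((prodM v n).map (Int.cast : ℤ → ℝ)) *ᵥ (FS^[n] v)) := by rw [h]
    _ = FS^[n] v := by
        rw [Matrix.mulVec_mulVec, ← map_mul_int, (Qmat_mul_prodM v n).1, map_one_int]
        simp

lemma dot3_transVec (v : R3) (n : ℕ) : dot3 (transVec v n) v = (FS^[n] v) 0 := by
  rw [transVec_eq, dot3_transpose_mulVec, Qmat_mulVec]
  simp [dot3, e1, Fin.sum_univ_three]

lemma Tseq_bound (v : R3) (hv : v ∈ F3set) (n : ℕ) :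
    ∀ x ∈ Tseq v n, 0 ≤ dot3 x v ∧ dot3 x v ≤ ∑ i ∈ Finset.range n, (FS^[i] v) 0 := by
  induction n with
  | zero =>
    intro x hx
    have : x = 0 := hx
    subst this
    simp [dot3_zero]
  | succ n ih =>
    intro x hx
    rcases hx with hx | ⟨y, hy, rfl⟩
    · obtain ⟨h1, h2⟩ := ih x hx
      refine ⟨h1, le_trans h2 ?_⟩
      rw [Finset.sum_range_succ]
      have := (iter_facts v hv n).2.1
      linarith
    · obtain ⟨h1, h2⟩ := ih y hy
      rw [dot3_add, dot3_transVec]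
      have hpos := (iter_facts v hv n).2.1
      constructor
      · linarith
      · rw [Finset.sum_range_succ]; linarith
lemma conn_std (v : R3) (hO : v ∈ O3) (h0 : 0 < v 0) (htri : v 2 < v 0 + v 1) :
    Connected3 (Plane v (v 0 + v 1 + v 2)) := by
  obtain ⟨h00, h01, h12⟩ := hO
  set ω := v 0 + v 1 + v 2 with hωdef
  have hvnn : ∀ i : Fin 3, 0 ≤ v i := O3_nonneg ⟨h00, h01, h12⟩
  have hvle : ∀ i : Fin 3, v i ≤ v 2 := O3_le2 ⟨h00, h01, h12⟩
  have hzero : (0 : Z3) ∈ Plane v ω := by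
    rw [mem_Plane, dot3_zero]
    exact ⟨le_refl 0, by linarith⟩
  have key : ∀ N : ℕ, ∀ x ∈ Plane v ω, ((x 0).natAbs + (x 1).natAbs + (x 2).natAbs = N) →
      Relation.ReflTransGen (fun a b => b ∈ Plane v ω ∧ adj3 a b) 0 x ∧
      Relation.ReflTransGen (fun a b => b ∈ Plane v ω ∧ adj3 a b) x 0 := by
    intro N
    induction N using Nat.strong_induction_on with
    | _ N ih =>
      intro x hx hN
      by_cases hx0 : x = 0
      · subst hx0; exact ⟨.refl, .refl⟩
      have hs0 := hx.1
      have hsω := hx.2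
      have hsum3 : dot3 x v = (x 0 : ℝ) * v 0 + (x 1 : ℝ) * v 1 + (x 2 : ℝ) * v 2 := by
        simp [dot3, Fin.sum_univ_three]
      have hdir : ∃ i, (0 < x i ∧ v i ≤ dot3 x v) ∨ (x i < 0 ∧ dot3 x v + v i < ω) := by
        by_contra hcon
        push_neg at hcon
        by_cases hneg : ∃ i, x i < 0
        · obtain ⟨i, hi⟩ := hneg
          have h1 := (hcon i).2 hi
          have h2 : v i ≤ v 2 := hvle i
          by_cases hposs : ∃ j, 0 < x j
          · obtain ⟨j, hj⟩ := hposs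
            have h3 := (hcon j).1 hj
            have h4 : v j ≤ v 2 := hvle j
            linarith
          · push_neg at hposs
            have hterm : ∀ j : Fin 3, (x j : ℝ) * v j ≤ 0 := fun j =>
              mul_nonpos_iff.mpr (Or.inr ⟨by exact_mod_cast hposs j, hvnn j⟩)
            have hs : dot3 x v ≤ 0 := by
              rw [hsum3]; linarith [hterm 0, hterm 1, hterm 2]
            linarith
        · push_neg at hneg
          have hex : ∃ i, 0 < x i := by
            by_contra hall
            push_neg at hall
            exact hx0 (funext fun i => le_antisymm (hall i) (hneg i))
          obtain ⟨i, hi⟩ := hex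
          have hlt := (hcon i).1 hi
          have hterm : ∀ j : Fin 3, 0 ≤ (x j : ℝ) * v j := fun j =>
            mul_nonneg (by exact_mod_cast hneg j) (hvnn j)
          have h1 : (1 : ℝ) ≤ (x i : ℝ) := by exact_mod_cast hi
          have h2 : v i ≤ (x i : ℝ) * v i := le_mul_of_one_le_left (hvnn i) h1
          fin_cases i <;> simp at hlt h2 <;>
            linarith [hterm 0, hterm 1, hterm 2, hsum3]
      obtain ⟨i, hcase⟩ := hdir
      rcases hcase with ⟨hxi, hvi'⟩ | ⟨hxi, hvi'⟩
      · -- move down: y = x - E3 i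
        set y := x - E3 i with hy
        have hxy : x = y + E3 i := by rw [hy, sub_add_cancel]
        have hydot : dot3 y v = dot3 x v - v i := by rw [hy, dot3_sub, dot3_E3]
        have hymem : y ∈ Plane v ω := by
          rw [mem_Plane, hydot]
          exact ⟨by linarith, by linarith [hvnn i]⟩
        have hyval : ∀ j, y j = x j - (if j = i then 1 else 0) := fun j => rfl
        have hnorm : (y 0).natAbs + (y 1).natAbs + (y 2).natAbs < N := by
          rw [hyval 0, hyval 1, hyval 2]
          fin_cases i <;> simp at hxi ⊢ <;> omega
        obtain ⟨g1, g2⟩ := ih _ hnorm y hymem rfl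
        refine ⟨g1.tail ⟨hx, by rw [hxy]; exact adj3_add_E3 y i⟩, ?_⟩
        exact Relation.ReflTransGen.head
          ⟨hymem, by rw [hxy]; exact adj3_symm (adj3_add_E3 y i)⟩ g2
      · -- move up: y = x + E3 i
        set y := x + E3 i with hy
        have hydot : dot3 y v = dot3 x v + v i := by rw [hy, dot3_add, dot3_E3]
        have hymem : y ∈ Plane v ω := by
          rw [mem_Plane, hydot]
          exact ⟨by linarith [hvnn i], by linarith⟩
        have hyval : ∀ j, y j = x j + (if j = i then 1 else 0) := fun j => rfl
        have hnorm : (y 0).natAbs + (y 1).natAbs + (y 2).natAbs < N := by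
          rw [hyval 0, hyval 1, hyval 2]
          fin_cases i <;> simp at hxi ⊢ <;> omega
        obtain ⟨g1, g2⟩ := ih _ hnorm y hymem rfl
        refine ⟨g1.tail ⟨hx, adj3_symm (adj3_add_E3 x i)⟩, ?_⟩
        exact Relation.ReflTransGen.head ⟨hymem, adj3_add_E3 x i⟩ g2
  refine ⟨⟨0, hzero⟩, fun x hx y hy => ?_⟩
  exact (key _ x hx rfl).2.trans (key _ y hy rfl).1
lemma FS_coord_mem (p : Submodule ℤ ℝ) (u : R3) (hu : ∀ i, u i ∈ p) (i : Fin 3) :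
    FS u i ∈ p := by
  rcases FS_cases u with ⟨_, h⟩ | ⟨_, h⟩ | ⟨_, h⟩ <;> rw [h] <;> fin_cases i <;> simp <;>
    first
      | exact hu _
      | exact sub_mem (hu _) (hu _)

lemma telescope_FS (w : R3) (m : ℕ) :
    (FS^[m] w) 0 + (FS^[m] w) 1 + (FS^[m] w) 2
      = (w 0 + w 1 + w 2) - 2 * ∑ i ∈ Finset.range m, (FS^[i] w) 0 := by
  induction m with
  | zero => simp
  | succ m ih =>
    rw [Function.iterate_succ_apply', sum_FS, ih, Finset.sum_range_succ]
    ring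

lemma connected_w0_lt (v : R3) (hv : v ∈ F3set) (n : ℕ) (ω : ℝ)
    (hc : Connected3 (Plane (FS^[n] v) ω)) : (FS^[n] v) 0 < ω := by
  set w := FS^[n] v with hwdef
  have hwO : w ∈ O3 := (iter_facts v hv n).1
  have hwpos : 0 < w 0 := (iter_facts v hv n).2.1
  obtain ⟨⟨x₀, hx₀⟩, hconn⟩ := hc
  have hω : 0 < ω := lt_of_le_of_lt hx₀.1 hx₀.2
  have h0mem : (0 : Z3) ∈ Plane w ω := by
    rw [mem_Plane, dot3_zero]; exact ⟨le_refl 0, hω⟩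
  -- a second point of the plane
  obtain ⟨p, hpmem, hpne⟩ : ∃ p : Z3, p ∈ Plane w ω ∧ p ≠ 0 := by
    rcases AddSubgroup.dense_or_cyclic (Submodule.span ℤ (Set.range w)).toAddSubgroup
      with hd | ⟨a, ha⟩
    · obtain ⟨g, hgS, hg⟩ := hd.exists_between hω
      have hgmem : g ∈ Submodule.span ℤ (Set.range w) := hgS
      obtain ⟨c, hc'⟩ := (Submodule.mem_span_range_iff_exists_fun ℤ).mp hgmem
      have hdotg : dot3 (fun i => c i) w = g := by
        rw [← hc']
        unfold dot3
        exact Finset.sum_congr rfl fun i _ => (zsmul_eq_mul _ _).symm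
      refine ⟨fun i => c i, ?_, ?_⟩
      · rw [mem_Plane, hdotg]
        exact ⟨le_of_lt hg.1, hg.2⟩
      · intro hzero
        rw [hzero, dot3_zero] at hdotg
        exact absurd hdotg.symm (ne_of_gt hg.1)
    · exfalso
      -- cyclic case: impossible
      have hmemS : ∀ m i, (FS^[m] w) i ∈ Submodule.span ℤ (Set.range w) := by
        intro m
        induction m with
        | zero => exact fun i => Submodule.subset_span ⟨i, rfl⟩
        | succ m ih =>
          intro i
          rw [Function.iterate_succ_apply']
          exact FS_coord_mem _ _ ih i
      have hiterpos : ∀ m, 0 < (FS^[m] w) 0 := by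
        intro m
        have : FS^[m] w = FS^[m + n] v := by
          rw [hwdef, ← Function.iterate_add_apply]
        rw [this]
        exact (iter_facts v hv (m + n)).2.1
      have hiternn : ∀ m, (0:ℝ) ≤ (FS^[m] w) 0 + (FS^[m] w) 1 + (FS^[m] w) 2 := by
        intro m
        have : FS^[m] w = FS^[m + n] v := by
          rw [hwdef, ← Function.iterate_add_apply]
        have hO := (iter_facts v hv (m + n)).1
        rw [this]
        have := O3_nonneg hO
        linarith [this 0, this 1, this 2]
      have hbig : ∀ m, |a| ≤ (FS^[m] w) 0 := by
        intro m
        have hmem' : (FS^[m] w) 0 ∈ AddSubgroup.closure ({a} : Set ℝ) := by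
          rw [← ha]
          exact Submodule.mem_toAddSubgroup _ |>.mpr (hmemS m 0)
        obtain ⟨k, hk⟩ := AddSubgroup.mem_closure_singleton.mp hmem'
        have hkr : (k : ℝ) * a = (FS^[m] w) 0 := by
          rw [← hk, zsmul_eq_mul]
        have hk0 : k ≠ 0 := by
          rintro rfl
          simp at hkr
          linarith [hiterpos m, hkr]
        have h1k : (1 : ℝ) ≤ |(k : ℝ)| := by
          have := Int.one_le_abs hk0
          exact_mod_cast this
        calc |a| = 1 * |a| := (one_mul _).symm
          _ ≤ |(k : ℝ)| * |a| := by
              apply mul_le_mul_of_nonneg_right h1k (abs_nonneg a)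
          _ = |(k : ℝ) * a| := (abs_mul _ _).symm
          _ = |(FS^[m] w) 0| := by rw [hkr]
          _ = (FS^[m] w) 0 := abs_of_pos (hiterpos m)
      have hapos : 0 < |a| := by
        rcases eq_or_ne a 0 with rfl | ha0
        · exfalso
          have hmem' : (FS^[0] w) 0 ∈ AddSubgroup.closure ({(0:ℝ)} : Set ℝ) := by
            rw [← ha]
            exact Submodule.mem_toAddSubgroup _ |>.mpr (hmemS 0 0)
          rw [Function.iterate_zero_apply] at hmem'
          obtain ⟨k, hk⟩ := AddSubgroup.mem_closure_singleton.mp hmem'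
          simp at hk
          linarith [hwpos, hk]
        · exact abs_pos.mpr ha0
      obtain ⟨m, hm⟩ := exists_nat_gt ((w 0 + w 1 + w 2) / (2 * |a|))
      have hsumge : (m : ℝ) * |a| ≤ ∑ i ∈ Finset.range m, (FS^[i] w) 0 := by
        calc (m : ℝ) * |a| = ∑ _i ∈ Finset.range m, |a| := by
              rw [Finset.sum_const, Finset.card_range, nsmul_eq_mul]
          _ ≤ ∑ i ∈ Finset.range m, (FS^[i] w) 0 :=
              Finset.sum_le_sum fun i _ => hbig i
      have htel := telescope_FS w m
      have h2a : 0 < 2 * |a| := by linarith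
      have : (w 0 + w 1 + w 2) < (m : ℝ) * (2 * |a|) := by
        rw [div_lt_iff₀ h2a] at hm
        linarith
      linarith [hiternn m]
  -- extract an adjacent step from the path 0 → p
  have hpath := hconn 0 h0mem p hpmem
  rcases hpath.cases_head with heq | ⟨q, ⟨hqmem, hadj⟩, _⟩
  · exact absurd heq.symm hpne
  · rcases adj3_cases hadj with ⟨i, hq | hq⟩
    · have hdq : dot3 q w = w i := by
        rw [hq, dot3_add, dot3_zero, dot3_E3, zero_add]
      have h1 : w 0 ≤ w i := O3_ge0 hwO i
      have h2 := hqmem.2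
      rw [hdq] at h2
      linarith
    · have hdq : dot3 q w = - w i := by
        have : dot3 (0 : Z3) w = dot3 q w + w i := by
          rw [hq, dot3_add, dot3_E3]
        rw [dot3_zero] at this
        linarith
      have h1 : w 0 ≤ w i := O3_ge0 hwO i
      have h2 := hqmem.1
      rw [hdq] at h2
      linarith
/-- Folding map: push the top layer down by `e_k`. -/
def fold3 (w' : R3) (k : Fin 3) (ω : ℝ) (y : Z3) : Z3 :=
  if dot3 y w' < ω - w' k then y else y - E3 k

lemma fold3_low {w' : R3} {k : Fin 3} {ω : ℝ} {y : Z3} (h : dot3 y w' < ω - w' k) :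
    fold3 w' k ω y = y := if_pos h

lemma fold3_high {w' : R3} {k : Fin 3} {ω : ℝ} {y : Z3} (h : ¬ dot3 y w' < ω - w' k) :
    fold3 w' k ω y = y - E3 k := if_neg h

lemma descent_step (w' : R3) (k : Fin 3) (ω : ℝ) (h0 : ∀ i, 0 ≤ w' i)
    {y z : Z3} (hy : y ∈ Plane w' ω) (hz : z ∈ Plane w' ω)
    {d : Z3} (hd : StepD k d) (hor : z = y + d ∨ y = z + d) :
    Relation.ReflTransGen (fun p q => q ∈ Plane w' (ω - w' k) ∧ adj3 p q)
      (fold3 w' k ω y) (fold3 w' k ω z) := by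
  obtain ⟨hy0, hyω⟩ := hy
  obtain ⟨hz0, hzω⟩ := hz
  rcases hd with rfl | ⟨c, hck, rfl⟩
  · -- d = E3 k
    rcases hor with rfl | rfl
    · -- z = y + E3 k
      have hs' : dot3 (y + E3 k) w' = dot3 y w' + w' k := by rw [dot3_add, dot3_E3]
      by_cases hylow : dot3 y w' < ω - w' k
      · by_cases hzlow : dot3 (y + E3 k) w' < ω - w' k
        · rw [fold3_low hylow, fold3_low hzlow]
          exact Relation.ReflTransGen.single ⟨⟨hz0, hzlow⟩, adj3_add_E3 y k⟩
        · rw [fold3_low hylow, fold3_high hzlow, add_sub_cancel_right]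
      · exfalso
        push_neg at hylow
        rw [hs'] at hzω
        linarith
    · -- y = z + E3 k
      have hs : dot3 (z + E3 k) w' = dot3 z w' + w' k := by rw [dot3_add, dot3_E3]
      by_cases hzlow : dot3 z w' < ω - w' k
      · by_cases hylow : dot3 (z + E3 k) w' < ω - w' k
        · rw [fold3_low hylow, fold3_low hzlow]
          exact Relation.ReflTransGen.single ⟨⟨hz0, hzlow⟩, adj3_symm (adj3_add_E3 z k)⟩
        · rw [fold3_high hylow, fold3_low hzlow, add_sub_cancel_right]
      · exfalso
        push_neg at hzlow
        rw [hs] at hyω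
        linarith
  · -- d = E3 k + E3 c
    have hdd : dot3 (E3 k + E3 c) w' = w' k + w' c := by rw [dot3_add, dot3_E3, dot3_E3]
    rcases hor with rfl | rfl
    · -- z = y + (E3 k + E3 c)
      have hzy : y + (E3 k + E3 c) = (y + E3 c) + E3 k := by
        rw [add_comm (E3 k) (E3 c), ← add_assoc]
      have hs' : dot3 (y + (E3 k + E3 c)) w' = dot3 y w' + (w' k + w' c) := by
        rw [dot3_add, hdd]
      have hm : dot3 (y + E3 c) w' = dot3 y w' + w' c := by rw [dot3_add, dot3_E3]
      by_cases hylow : dot3 y w' < ω - w' k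
      · have hmA : (y + E3 c) ∈ Plane w' (ω - w' k) := by
          rw [mem_Plane, hm]
          rw [hs'] at hzω
          exact ⟨by linarith [h0 c], by linarith⟩
        by_cases hzlow : dot3 (y + (E3 k + E3 c)) w' < ω - w' k
        · rw [fold3_low hylow, fold3_low hzlow]
          refine Relation.ReflTransGen.tail
            (Relation.ReflTransGen.single ⟨hmA, adj3_add_E3 y c⟩) ⟨⟨hz0, hzlow⟩, ?_⟩
          rw [hzy]
          exact adj3_add_E3 _ k
        · rw [fold3_low hylow, fold3_high hzlow, hzy, add_sub_cancel_right]
          exact Relation.ReflTransGen.single ⟨hmA, adj3_add_E3 y c⟩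
      · exfalso
        push_neg at hylow
        rw [hs'] at hzω
        linarith [h0 c]
    · -- y = z + (E3 k + E3 c)
      have hzy : z + (E3 k + E3 c) = (z + E3 c) + E3 k := by
        rw [add_comm (E3 k) (E3 c), ← add_assoc]
      have hs : dot3 (z + (E3 k + E3 c)) w' = dot3 z w' + (w' k + w' c) := by
        rw [dot3_add, hdd]
      have hm : dot3 (z + E3 c) w' = dot3 z w' + w' c := by rw [dot3_add, dot3_E3]
      by_cases hzlow : dot3 z w' < ω - w' k
      · have hmA : (z + E3 c) ∈ Plane w' (ω - w' k) := by
          rw [mem_Plane, hm]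
          rw [hs] at hyω
          exact ⟨by linarith [h0 c], by linarith⟩
        by_cases hylow : dot3 (z + (E3 k + E3 c)) w' < ω - w' k
        · rw [fold3_low hylow, fold3_low hzlow]
          refine Relation.ReflTransGen.tail
            (Relation.ReflTransGen.single ⟨hmA, ?_⟩) ⟨⟨hz0, hzlow⟩, ?_⟩
          · rw [hzy]
            exact adj3_symm (adj3_add_E3 _ k)
          · exact adj3_symm (adj3_add_E3 z c)
        · rw [fold3_high hylow, fold3_low hzlow, hzy, add_sub_cancel_right]
          exact Relation.ReflTransGen.single ⟨⟨hz0, hzlow⟩, adj3_symm (adj3_add_E3 z c)⟩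
      · exfalso
        push_neg at hzlow
        rw [hs] at hyω
        linarith [h0 c]

lemma descent_core (w' : R3) (k : Fin 3) (ω : ℝ) (h0 : ∀ i, 0 ≤ w' i) (hk : 0 < w' k)
    {a b : Z3} (ha : a ∈ Plane w' (ω - w' k)) (hb : b ∈ Plane w' (ω - w' k))
    (hpath : Relation.ReflTransGen
      (fun p q => q ∈ Plane w' ω ∧ ∃ d, StepD k d ∧ (q = p + d ∨ p = q + d)) a b) :
    Relation.ReflTransGen (fun p q => q ∈ Plane w' (ω - w' k) ∧ adj3 p q) a b := by
  have haB : a ∈ Plane w' ω := ⟨ha.1, by have := ha.2; linarith⟩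
  have main : ∀ x : Z3, Relation.ReflTransGen
      (fun p q => q ∈ Plane w' ω ∧ ∃ d, StepD k d ∧ (q = p + d ∨ p = q + d)) a x →
      x ∈ Plane w' ω ∧ Relation.ReflTransGen (fun p q => q ∈ Plane w' (ω - w' k) ∧ adj3 p q)
        (fold3 w' k ω a) (fold3 w' k ω x) := by
    intro x hx
    induction hx with
    | refl => exact ⟨haB, Relation.ReflTransGen.refl⟩
    | tail h1 h2 ih =>
      obtain ⟨hq, d, hd, hor⟩ := h2
      exact ⟨hq, ih.2.trans (descent_step w' k ω h0 ih.1 hq hd hor)⟩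
  have hfin := (main b hpath).2
  rwa [fold3_low ha.2, fold3_low hb.2] at hfin

lemma descent (w : R3) (hO : w ∈ O3) (h0 : 0 < w 0) (ω : ℝ) (hωα : w 0 < ω)
    (hc : Connected3 (Plane w ω)) : Connected3 (Plane (FS w) (ω - w 0)) := by
  set j := FSidx w with hj
  set w' := FS w with hw'
  have hkey : w' j = w 0 := FS_at_idx w
  have hO' : w' ∈ O3 := FS_mem_O3 hO
  have h0' : ∀ i, 0 ≤ w' i := O3_nonneg hO'
  have hrec : ((Mmat j).map (Int.cast : ℤ → ℝ)) *ᵥ w' = w := Mmat_mulVec_FS w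
  have hval : ∀ x : Z3, dot3 ((Mmat j)ᵀ *ᵥ x) w' = dot3 x w := fun x => by
    rw [dot3_transpose_mulVec, hrec]
  have hψφ : ∀ x : Z3, (Mmat j)ᵀ *ᵥ ((Nmat j)ᵀ *ᵥ x) = x := fun x => by
    rw [Matrix.mulVec_mulVec, ← Matrix.transpose_mul, Nmat_mul_Mmat,
      Matrix.transpose_one, Matrix.one_mulVec]
  constructor
  · refine ⟨0, ?_⟩
    rw [mem_Plane, dot3_zero]
    exact ⟨le_refl 0, by linarith⟩
  intro a ha b hb
  have hφmem : ∀ p : Z3, p ∈ Plane w' (ω - w 0) → ((Nmat j)ᵀ *ᵥ p) ∈ Plane w ω := by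
    intro p hp
    have hdp : dot3 ((Nmat j)ᵀ *ᵥ p) w = dot3 p w' := by
      rw [← hval ((Nmat j)ᵀ *ᵥ p), hψφ]
    rw [mem_Plane, hdp]
    exact ⟨hp.1, by have := hp.2; linarith⟩
  have hpath0 := hc.2 _ (hφmem a ha) _ (hφmem b hb)
  have hstep : ∀ x y : Z3, (y ∈ Plane w ω ∧ adj3 x y) →
      (fun p q => q ∈ Plane w' ω ∧ ∃ d, StepD j d ∧ (q = p + d ∨ p = q + d))
        ((Mmat j)ᵀ *ᵥ x) ((Mmat j)ᵀ *ᵥ y) := by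
    rintro x y ⟨hymem, hadj⟩
    refine ⟨?_, ?_⟩
    · rw [mem_Plane, hval]
      exact hymem
    · rcases adj3_cases hadj with ⟨i, hcase | hcase⟩
      · refine ⟨Mmat j i, stepD_row j i, Or.inl ?_⟩
        rw [hcase, Matrix.mulVec_add, transpose_mulVec_E3]
      · refine ⟨Mmat j i, stepD_row j i, Or.inr ?_⟩
        rw [hcase, Matrix.mulVec_add, transpose_mulVec_E3]
  have hlift := Relation.ReflTransGen.lift
    (p := fun p q => q ∈ Plane w' ω ∧ ∃ d, StepD j d ∧ (q = p + d ∨ p = q + d))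
    (fun x : Z3 => (Mmat j)ᵀ *ᵥ x) hstep _ _ hpath0
  simp only [Function.onFun] at hlift
  rw [hψφ a, hψφ b] at hlift
  have ha' : a ∈ Plane w' (ω - w' j) := by rwa [hkey]
  have hb' : b ∈ Plane w' (ω - w' j) := by rwa [hkey]
  have hcore := descent_core w' j ω h0' (by rw [hkey]; exact h0) ha' hb' hlift
  rw [← hkey]
  exact hcore

lemma master (v : R3) (hv : v ∈ F3set) :
    ∀ (m n : ℕ) (ω : ℝ), Connected3 (Plane (FS^[n] v) ω) →
      ∑ i ∈ Finset.range m, (FS^[n + i] v) 0 < ω := by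
  intro m
  induction m with
  | zero =>
    intro n ω hc
    obtain ⟨⟨x, hx⟩, -⟩ := hc
    simpa using lt_of_le_of_lt hx.1 hx.2
  | succ m ih =>
    intro n ω hc
    have hfacts := iter_facts v hv n
    have hωα : (FS^[n] v) 0 < ω := connected_w0_lt v hv n ω hc
    have hdesc := descent (FS^[n] v) hfacts.1 hfacts.2.1 ω hωα hc
    rw [← Function.iterate_succ_apply' FS n v] at hdesc
    have hih := ih (n + 1) (ω - (FS^[n] v) 0) hdesc
    have hsum : ∑ i ∈ Finset.range m, (FS^[n + 1 + i] v) 0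
        = ∑ i ∈ Finset.range m, (FS^[n + (i + 1)] v) 0 :=
      Finset.sum_congr rfl fun i _ => by rw [show n + 1 + i = n + (i + 1) by omega]
    rw [hsum] at hih
    rw [Finset.sum_range_succ']
    simp only [Nat.add_zero]
    linarith
/-- For `v ∈ F₃`, every `x ∈ Tₙ` satisfies
`0 ≤ ⟨x,v⟩ < Σ_{i=0}^{n} v₁⁽ⁱ⁾`; consequently `⋃ₙ Tₙ ⊆ P(v, Ω(v))`. -/
theorem Tseq_subset_plane (v : R3) (hv : v ∈ F3set) :
    (∀ n : ℕ, ∀ x ∈ Tseq v n,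
      0 ≤ dot3 x v ∧ dot3 x v < ∑ i ∈ Finset.range (n + 1), (FS^[i] v) 0) ∧
    (⋃ n : ℕ, Tseq v n) ⊆ Plane v (omegaConn v) := by
  have hfacts := iter_facts v hv
  have hbd := Tseq_bound v hv
  have part1 : ∀ n : ℕ, ∀ x ∈ Tseq v n,
      0 ≤ dot3 x v ∧ dot3 x v < ∑ i ∈ Finset.range (n + 1), (FS^[i] v) 0 := by
    intro n x hx
    obtain ⟨h1, h2⟩ := hbd n x hx
    refine ⟨h1, lt_of_le_of_lt h2 ?_⟩
    rw [Finset.sum_range_succ]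
    have := (hfacts n).2.1
    linarith
  refine ⟨part1, ?_⟩
  intro x hx
  simp only [Set.mem_iUnion] at hx
  obtain ⟨n, hx⟩ := hx
  obtain ⟨h1, h2⟩ := hbd n x hx
  have hkey : ∑ i ∈ Finset.range (n + 1), (FS^[i] v) 0 ≤ omegaConn v := by
    apply le_csInf
    · refine ⟨v 0 + v 1 + v 2, ?_, conn_std v hv.1 (by simpa using (hfacts 0).2.1) (by simpa using hv.2 0)⟩
      obtain ⟨a0, a1, a2⟩ := hv.1
      linarith
    · rintro b ⟨hb0, hbconn⟩
      have hm := master v hv (n + 1) 0 b (by simpa using hbconn)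
      have : ∑ i ∈ Finset.range (n + 1), (FS^[0 + i] v) 0
          = ∑ i ∈ Finset.range (n + 1), (FS^[i] v) 0 :=
        Finset.sum_congr rfl fun i _ => by rw [Nat.zero_add]
      linarith [hm, this.symm.le]
  refine ⟨h1, lt_of_lt_of_le ?_ hkey⟩
  rw [Finset.sum_range_succ]
  have := (hfacts n).2.1
  linarith
end
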